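/- Let n ≥ 4, p = p₀(n) = (n+1+√(n²+10n−7))/(2(n−1)), let R > 0 with 8R ≥ 1, let j ≥ 1 be an integer with a_j = 3·4^{j−1} − 1, let A > 0, and set D = 3² · 2^{3n−2−3(n−1)p/2}. Suppose F ∈ C²([a_jR, T)) satisfies F'(a_jR) ≥ 0, F((a_j+1)R) ≥ 0, and F''(t) ≥ A (t − a_jR)^{(n−1)(1−p/2)} ( log( (t+(a_j−2)R) / (2(a_j−1)R) ) )^{(p^j−1)/(p−1)} for a_jR ≤ t < T. Then for all t with (2(a_j+2)R)² ≤ t < T one has F(t) ≥ ( A / (16^j D) ) · ( (1/2) log t )^{(p^j−1)/(p−1)} · t^{ n+1−(n−1)p/2}. -/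

import Mathlib

set_option maxHeartbeats 1000000

/-- `a_j = 3·4^{j-1} - 1`. -/
noncomputable def aseq (j : ℕ) : ℝ := 3 * 4 ^ (j - 1) - 1

/-- `D = 3²·2^{3n-2-3(n-1)p/2}`. -/
noncomputable def Dconst (n : ℕ) (p : ℝ) : ℝ :=
  3 ^ 2 * (2 : ℝ) ^ (3 * (n : ℝ) - 2 - 3 * ((n : ℝ) - 1) * p / 2)

/-- Arithmetic helper: basic consequences of `t ≥ (2(a+2)R)²` and `h = t/(a+2)`. -/
lemma arith_aux {a R t h : ℝ} (ha : 2 ≤ a) (hR : 1 / 8 ≤ R) (hRpos : 0 < R)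
    (ht : (2 * (a + 2) * R) ^ 2 ≤ t) (hh : (a + 2) * h = t) :
    2 * R ≤ h ∧ a * R + t / 8 ≤ a * h := by
  have hb : (0 : ℝ) < a + 2 := by linarith
  have h1 : 4 * (a + 2) * R ^ 2 ≤ h := by
    have e : (a + 2) * (4 * (a + 2) * R ^ 2) ≤ (a + 2) * h := by nlinarith [ht, hh]
    exact le_of_mul_le_mul_left e hb
  have hRR : R / 8 ≤ R ^ 2 := by nlinarith [hRpos.le, hR]
  have e2 : (a + 2) * (R / 8) ≤ (a + 2) * R ^ 2 := mul_le_mul_of_nonneg_left hRR hb.le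
  have e3 : 4 * R ≤ (a + 2) * R := mul_le_mul_of_nonneg_right (by linarith) hRpos.le
  have h2R : 2 * R ≤ h := by linarith
  have hhpos : 0 < h := by linarith
  have e4 : a * (2 * R) ≤ a * h := mul_le_mul_of_nonneg_left h2R (by linarith)
  have e5 : 0 ≤ (3 * a - 2) * h := mul_nonneg (by linarith) hhpos.le
  refine ⟨h2R, ?_⟩
  have ht' : t = (a + 2) * h := hh.symm
  rw [ht']
  nlinarith [e4, e5]

/-- **Double integration of the iterated bound** (Proposition 4.1).
A logarithmic lower bound for `F''` on `[a_jR, T)` with constant `A`, together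
with `F'(a_jR) ≥ 0` and `F((a_j+1)R) ≥ 0`, yields, for `(2(a_j+2)R)² ≤ t < T`,
`F(t) ≥ (A / (16^j D)) ((1/2) log t)^{(p^j-1)/(p-1)} t^{n+1-(n-1)p/2}`. -/
theorem double_integration_step
    (n : ℕ) (hn : 4 ≤ n) (p R A T : ℝ) (j : ℕ) (hj : 1 ≤ j)
    (hp : p = ((n : ℝ) + 1 + Real.sqrt ((n : ℝ) ^ 2 + 10 * (n : ℝ) - 7)) / (2 * ((n : ℝ) - 1)))
    (hR : 0 < R) (h8R : 1 ≤ 8 * R) (hA : 0 < A)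
    (F F' F'' : ℝ → ℝ)
    (hF' : ∀ t ∈ Set.Ico (aseq j * R) T, HasDerivWithinAt F (F' t) (Set.Ico (aseq j * R) T) t)
    (hF'' : ∀ t ∈ Set.Ico (aseq j * R) T, HasDerivWithinAt F' (F'' t) (Set.Ico (aseq j * R) T) t)
    (hcont : ContinuousOn F'' (Set.Ico (aseq j * R) T))
    (hF'0 : 0 ≤ F' (aseq j * R))
    (hF0 : 0 ≤ F ((aseq j + 1) * R))
    (hlow : ∀ t, aseq j * R ≤ t → t < T →
      A * (t - aseq j * R) ^ (((n : ℝ) - 1) * (1 - p / 2)) *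
          Real.log ((t + (aseq j - 2) * R) / (2 * (aseq j - 1) * R)) ^
            ((p ^ j - 1) / (p - 1)) ≤ F'' t) :
    ∀ t, (2 * (aseq j + 2) * R) ^ 2 ≤ t → t < T →
      A / (16 ^ j * Dconst n p) *
          (1 / 2 * Real.log t) ^ ((p ^ j - 1) / (p - 1)) *
          t ^ ((n : ℝ) + 1 - ((n : ℝ) - 1) * p / 2) ≤ F t := by
  obtain ⟨k, rfl⟩ : ∃ k, j = k + 1 := ⟨j - 1, (Nat.succ_pred_eq_of_pos hj).symm⟩
  intro t ht htT
  set a : ℝ := aseq (k + 1) with ha_def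
  have hak : a = 3 * 4 ^ k - 1 := by simp [ha_def, aseq]
  have hk1 : (1 : ℝ) ≤ 4 ^ k := one_le_pow₀ (by norm_num)
  have ha2 : (2 : ℝ) ≤ a := by rw [hak]; linarith
  have hb4 : (4 : ℝ) ≤ a + 2 := by linarith
  have hbpos : (0 : ℝ) < a + 2 := by linarith
  have hR8 : (1 : ℝ) / 8 ≤ R := by linarith
  have hn4 : (4 : ℝ) ≤ (n : ℝ) := by exact_mod_cast hn
  -- bounds on p
  have hsqlb : (n : ℝ) - 3 < Real.sqrt ((n : ℝ) ^ 2 + 10 * (n : ℝ) - 7) := by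
    have h1 : ((n : ℝ) - 3) = Real.sqrt (((n : ℝ) - 3) ^ 2) :=
      (Real.sqrt_sq (by linarith)).symm
    rw [h1]
    exact Real.sqrt_lt_sqrt (by positivity) (by nlinarith)
  have hsqub : Real.sqrt ((n : ℝ) ^ 2 + 10 * (n : ℝ) - 7) ≤ 3 * (n : ℝ) - 5 := by
    have h1 : Real.sqrt ((3 * (n : ℝ) - 5) ^ 2) = 3 * (n : ℝ) - 5 :=
      Real.sqrt_sq (by linarith)
    rw [← h1]
    exact Real.sqrt_le_sqrt (by nlinarith)
  have hp1 : 1 < p := by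
    rw [hp, lt_div_iff₀ (by linarith : (0:ℝ) < 2 * ((n:ℝ) - 1))]
    linarith
  have hp2 : p ≤ 2 := by
    rw [hp, div_le_iff₀ (by linarith : (0:ℝ) < 2 * ((n:ℝ) - 1))]
    linarith
  set q : ℝ := (p ^ (k + 1) - 1) / (p - 1) with hq_def
  have hq0 : 0 ≤ q := by
    apply div_nonneg _ (by linarith)
    have : (1 : ℝ) ≤ p ^ (k + 1) := one_le_pow₀ hp1.le
    linarith
  set α : ℝ := ((n : ℝ) - 1) * (1 - p / 2) with hα_def
  have hα0 : 0 ≤ α := mul_nonneg (by linarith) (by linarith)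
  -- basic facts about t
  have h2bR : (1 : ℝ) ≤ 2 * (a + 2) * R := by
    have e : (0:ℝ) ≤ (a - 2) * (R - 1/8) := mul_nonneg (by linarith) (by linarith)
    linarith [e]
  have ht1 : (1 : ℝ) ≤ t := by
    have e := mul_le_mul h2bR h2bR (by norm_num : (0:ℝ) ≤ 1)
      (by linarith : (0:ℝ) ≤ 2 * (a + 2) * R)
    nlinarith [e, ht]
  have htpos : (0 : ℝ) < t := by linarith
  have hsq : 2 * (a + 2) * R ≤ Real.sqrt t := by
    have := Real.sqrt_le_sqrt ht
    rwa [Real.sqrt_sq (by positivity)] at this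
  have hsqt_pos : 0 < Real.sqrt t := Real.sqrt_pos.2 htpos
  have hsqsq : Real.sqrt t * Real.sqrt t = t := Real.mul_self_sqrt htpos.le
  have hsqt_le : Real.sqrt t ≤ t :=
    calc Real.sqrt t ≤ Real.sqrt (t ^ 2) := Real.sqrt_le_sqrt (by nlinarith [ht1])
      _ = t := Real.sqrt_sq htpos.le
  have hlog0 : 0 ≤ 1 / 2 * Real.log t := by
    have := Real.log_nonneg ht1
    linarith
  -- geometry of the integration region
  set h : ℝ := t / (a + 2) with hh_def
  have hh : (a + 2) * h = t := by rw [hh_def]; field_simp [hbpos.ne']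
  have hhpos : 0 < h := by positivity
  obtain ⟨hhR, haRt8'⟩ := arith_aux ha2 hR8 hR ht hh
  set u₁ : ℝ := a * h with hu₁_def
  set s₁ : ℝ := (a + 1) * h with hs₁_def
  have hu₁s₁ : u₁ ≤ s₁ := by rw [hu₁_def, hs₁_def]; nlinarith [hhpos.le]
  have hs₁t : s₁ < t := by rw [hs₁_def, ← hh]; nlinarith [hhpos]
  have haRt8 : a * R + t / 8 ≤ u₁ := haRt8'
  have haRu₁ : a * R ≤ u₁ := by
    have : (0:ℝ) < t / 8 := by linarith
    linarith
  have haRt : a * R ≤ t := by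
    have h1 : u₁ ≤ s₁ := hu₁s₁
    linarith [hs₁t]
  have haRleT : a * R < T := by linarith
  -- √t-related bounds
  have he0 : 2 * (a + 2) * R * Real.sqrt t ≤ Real.sqrt t * Real.sqrt t :=
    mul_le_mul_of_nonneg_right hsq (Real.sqrt_nonneg t)
  have hh2Rsq : 2 * R * Real.sqrt t ≤ h := by
    have e : (a + 2) * (2 * R * Real.sqrt t) ≤ (a + 2) * h := by
      rw [hh]; nlinarith [he0, hsqsq]
    exact le_of_mul_le_mul_left e hbpos
  have hu₁sqrt : 2 * (a - 1) * R * Real.sqrt t ≤ u₁ := by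
    have e1 : a * (2 * R * Real.sqrt t) ≤ a * h :=
      mul_le_mul_of_nonneg_left hh2Rsq (by linarith)
    have e2 : 0 ≤ R * Real.sqrt t := mul_nonneg hR.le (Real.sqrt_nonneg t)
    rw [hu₁_def]
    linarith [e1, e2]
  -- F'' is bounded below by m on [u₁, s₁]
  set L : ℝ := 1 / 2 * Real.log t with hL_def
  set m : ℝ := A * (t / 8) ^ α * L ^ q with hm_def
  have hm_nonneg : 0 ≤ m := by
    apply mul_nonneg (mul_nonneg hA.le (Real.rpow_nonneg (by positivity) _))
    exact Real.rpow_nonneg hlog0 _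
  have ha1Rpos : (0:ℝ) < 2 * (a - 1) * R := mul_pos (by linarith) hR
  have hm : ∀ u ∈ Set.Icc u₁ s₁, m ≤ F'' u := by
    intro u hu
    have h1 : a * R ≤ u := le_trans haRu₁ hu.1
    have h2 : u < T := lt_trans (lt_of_le_of_lt hu.2 hs₁t) htT
    refine le_trans ?_ (hlow u h1 h2)
    have e1 : (t / 8) ^ α ≤ (u - a * R) ^ α := by
      apply Real.rpow_le_rpow (by positivity) _ hα0
      have h3 := hu.1
      linarith [haRt8]
    have e2 : L ^ q ≤ Real.log ((u + (a - 2) * R) / (2 * (a - 1) * R)) ^ q := by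
      apply Real.rpow_le_rpow hlog0 _ hq0
      have hLs : L = Real.log (Real.sqrt t) := by
        rw [Real.log_sqrt htpos.le]; rw [hL_def]; ring
      rw [hLs]
      apply Real.log_le_log hsqt_pos
      rw [le_div_iff₀ ha1Rpos]
      have h4 : 2 * (a - 1) * R * Real.sqrt t ≤ u := le_trans hu₁sqrt hu.1
      have h5 : (0:ℝ) ≤ (a - 2) * R := mul_nonneg (by linarith) hR.le
      linarith
    calc m = A * (t / 8) ^ α * L ^ q := rfl
      _ ≤ A * (u - a * R) ^ α * L ^ q := by
          apply mul_le_mul_of_nonneg_right _ (Real.rpow_nonneg hlog0 _)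
          exact mul_le_mul_of_nonneg_left e1 hA.le
      _ ≤ A * (u - a * R) ^ α *
            Real.log ((u + (a - 2) * R) / (2 * (a - 1) * R)) ^ q := by
          apply mul_le_mul_of_nonneg_left e2
          exact mul_nonneg hA.le
            (Real.rpow_nonneg (by linarith [haRt8, hu.1] : (0:ℝ) ≤ u - a * R) _)
  -- derivative facts
  have hderivF : ∀ x ∈ Set.Ioo (a * R) T, HasDerivAt F (F' x) x := fun x hx =>
    (hF' x ⟨hx.1.le, hx.2⟩).hasDerivAt (Ico_mem_nhds hx.1 hx.2)
  have hderivF' : ∀ x ∈ Set.Ioo (a * R) T, HasDerivAt F' (F'' x) x := fun x hx =>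
    (hF'' x ⟨hx.1.le, hx.2⟩).hasDerivAt (Ico_mem_nhds hx.1 hx.2)
  have hIccsub : Set.Icc (a * R) t ⊆ Set.Ico (a * R) T := fun x hx =>
    ⟨hx.1, lt_of_le_of_lt hx.2 htT⟩
  have hIoosub : Set.Ioo (a * R) t ⊆ Set.Ioo (a * R) T := fun x hx =>
    ⟨hx.1, lt_trans hx.2 htT⟩
  have hcontF' : ContinuousOn F' (Set.Icc (a * R) t) := fun x hx =>
    ((hF'' x (hIccsub hx)).continuousWithinAt).mono hIccsub
  have hcontF : ContinuousOn F (Set.Icc (a * R) t) := fun x hx =>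
    ((hF' x (hIccsub hx)).continuousWithinAt).mono hIccsub
  -- F'' nonneg
  have hF''0 : ∀ x, a * R ≤ x → x < T → 0 ≤ F'' x := by
    intro x h1 h2
    refine le_trans ?_ (hlow x h1 h2)
    apply mul_nonneg (mul_nonneg hA.le (Real.rpow_nonneg (by linarith) _))
    apply Real.rpow_nonneg
    apply Real.log_nonneg
    rw [le_div_iff₀ ha1Rpos]
    have h5 : (0:ℝ) ≤ (a - 2) * R := mul_nonneg (by linarith) hR.le
    linarith
  -- monotonicity of F'
  have monF' : MonotoneOn F' (Set.Icc (a * R) t) := by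
    apply monotoneOn_of_deriv_nonneg (convex_Icc _ _) hcontF'
    · intro x hx
      rw [interior_Icc] at hx
      exact (hderivF' x (hIoosub hx)).differentiableAt.differentiableWithinAt
    · intro x hx
      rw [interior_Icc] at hx
      rw [(hderivF' x (hIoosub hx)).deriv]
      exact hF''0 x hx.1.le (lt_trans hx.2 htT)
  -- MVT on [u₁, s₁] for F'
  have hu₁t : u₁ ≤ t := le_trans hu₁s₁ hs₁t.le
  have hu₁mem : u₁ ∈ Set.Icc (a * R) t := ⟨haRu₁, hu₁t⟩
  have hs₁mem : s₁ ∈ Set.Icc (a * R) t := ⟨le_trans haRu₁ hu₁s₁, hs₁t.le⟩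
  have key1 : m * (s₁ - u₁) ≤ F' s₁ - F' u₁ := by
    apply (convex_Icc u₁ s₁).mul_sub_le_image_sub_of_le_deriv
      (hcontF'.mono (Set.Icc_subset_Icc hu₁mem.1 hs₁mem.2))
    · intro x hx
      rw [interior_Icc] at hx
      have hx' : x ∈ Set.Ioo (a * R) t :=
        ⟨lt_of_le_of_lt haRu₁ hx.1, lt_of_lt_of_le hx.2 hs₁t.le⟩
      exact (hderivF' x (hIoosub hx')).differentiableAt.differentiableWithinAt
    · intro x hx
      rw [interior_Icc] at hx
      have hx' : x ∈ Set.Ioo (a * R) t :=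
        ⟨lt_of_le_of_lt haRu₁ hx.1, lt_of_lt_of_le hx.2 hs₁t.le⟩
      rw [(hderivF' x (hIoosub hx')).deriv]
      exact hm x ⟨hx.1.le, hx.2.le⟩
    · exact ⟨le_rfl, hu₁s₁⟩
    · exact ⟨hu₁s₁, le_rfl⟩
    · exact hu₁s₁
  have hF'u₁ : 0 ≤ F' u₁ := by
    have := monF' ⟨le_rfl, haRt⟩ hu₁mem haRu₁
    linarith
  -- F' ≥ m * h on [s₁, t]
  have step : ∀ s ∈ Set.Icc s₁ t, m * h ≤ F' s := by
    intro s hs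
    have h1 : F' s₁ ≤ F' s := monF' hs₁mem ⟨le_trans hs₁mem.1 hs.1, hs.2⟩ hs.1
    have h2 : s₁ - u₁ = h := by rw [hs₁_def, hu₁_def]; ring
    rw [h2] at key1
    linarith
  -- MVT on [s₁, t] for F
  have key2 : m * h * (t - s₁) ≤ F t - F s₁ := by
    apply (convex_Icc s₁ t).mul_sub_le_image_sub_of_le_deriv
      (hcontF.mono (Set.Icc_subset_Icc hs₁mem.1 le_rfl))
    · intro x hx
      rw [interior_Icc] at hx
      have hx' : x ∈ Set.Ioo (a * R) t := ⟨lt_of_le_of_lt hs₁mem.1 hx.1, hx.2⟩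
      exact (hderivF x (hIoosub hx')).differentiableAt.differentiableWithinAt
    · intro x hx
      rw [interior_Icc] at hx
      have hx' : x ∈ Set.Ioo (a * R) t := ⟨lt_of_le_of_lt hs₁mem.1 hx.1, hx.2⟩
      rw [(hderivF x (hIoosub hx')).deriv]
      exact step x ⟨hx.1.le, hx.2.le⟩
    · exact ⟨le_rfl, hs₁t.le⟩
    · exact ⟨hs₁t.le, le_rfl⟩
    · exact hs₁t.le
  -- F s₁ ≥ 0 via monotonicity of F
  have monF : MonotoneOn F (Set.Icc (a * R) t) := by
    apply monotoneOn_of_deriv_nonneg (convex_Icc _ _) hcontF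
    · intro x hx
      rw [interior_Icc] at hx
      exact (hderivF x (hIoosub hx)).differentiableAt.differentiableWithinAt
    · intro x hx
      rw [interior_Icc] at hx
      rw [(hderivF x (hIoosub hx)).deriv]
      have : F' (a * R) ≤ F' x := monF' ⟨le_rfl, haRt⟩ ⟨hx.1.le, hx.2.le⟩ hx.1.le
      linarith
  have hRh : R ≤ h := by linarith
  have ha1Rh : (a + 1) * R ≤ (a + 1) * h :=
    mul_le_mul_of_nonneg_left hRh (by linarith)
  have haR1mem : (a + 1) * R ∈ Set.Icc (a * R) t := by
    constructor
    · linarith [hR.le]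
    · have : (a + 1) * h ≤ t := hs₁t.le
      linarith
  have hFs₁0 : 0 ≤ F s₁ := by
    have h1 : (a + 1) * R ≤ s₁ := by rw [hs₁_def]; exact ha1Rh
    have := monF haR1mem hs₁mem h1
    linarith
  have hts₁ : t - s₁ = h := by rw [hs₁_def, ← hh]; ring
  have hFt : m * h * h ≤ F t := by
    rw [hts₁] at key2
    linarith
  -- final algebra
  have hexp : (n : ℝ) + 1 - ((n : ℝ) - 1) * p / 2 = α + 2 := by rw [hα_def]; ring
  have h8α : (8 : ℝ) ^ α = 2 ^ (3 * α) := by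
    rw [show (8 : ℝ) = (2 : ℝ) ^ (3 : ℝ) by
      rw [show (3:ℝ) = ((3:ℕ):ℝ) by norm_num, Real.rpow_natCast]; norm_num,
      ← Real.rpow_mul (by norm_num)]
  have hD : Dconst n p = 18 * 8 ^ α := by
    rw [Dconst, show 3 * (n : ℝ) - 2 - 3 * ((n : ℝ) - 1) * p / 2 = 3 * α + 1 by
      rw [hα_def]; ring, Real.rpow_add (by norm_num), Real.rpow_one, h8α]
    ring
  have h8αpos : (0 : ℝ) < (8 : ℝ) ^ α := Real.rpow_pos_of_pos (by norm_num) _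
  have h16 : (a + 2) ^ 2 ≤ (16 : ℝ) ^ (k + 1) := by
    have h16k : (16 : ℝ) ^ (k + 1) = 16 * (4 ^ k * 4 ^ k) := by
      rw [pow_succ, show (16 : ℝ) = 4 * 4 by norm_num, mul_pow]; ring
    have e : (0:ℝ) ≤ (7 * 4 ^ k + 1) * (4 ^ k - 1) :=
      mul_nonneg (by positivity) (by linarith)
    rw [hak, h16k]
    linarith [e]
  have h16pos : (0 : ℝ) < (16 : ℝ) ^ (k + 1) := by positivity
  have htα : (0:ℝ) ≤ t ^ α := Real.rpow_nonneg htpos.le _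
  have hLq : (0:ℝ) ≤ L ^ q := Real.rpow_nonneg hlog0 _
  have hrw : t ^ (α + 2) = t ^ α * t ^ 2 := by
    rw [Real.rpow_add htpos, Real.rpow_two]
  calc A / (16 ^ (k + 1) * Dconst n p) * L ^ q * t ^ ((n : ℝ) + 1 - ((n : ℝ) - 1) * p / 2)
      = (A * L ^ q * t ^ α) * (t ^ 2 / (16 ^ (k + 1) * (18 * 8 ^ α))) := by
        rw [hexp, hrw, hD]; ring
    _ ≤ (A * L ^ q * t ^ α) * (h ^ 2 / 8 ^ α) := by
        apply mul_le_mul_of_nonneg_left _ (by positivity)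
        have hh2 : h ^ 2 / 8 ^ α = t ^ 2 / ((a + 2) ^ 2 * 8 ^ α) := by
          rw [hh_def, div_pow, div_div]
        rw [hh2]
        apply div_le_div_of_nonneg_left (sq_nonneg t) (mul_pos (pow_pos hbpos 2) h8αpos)
        have e1 : (a + 2) ^ 2 ≤ 16 ^ (k + 1) * 18 := by linarith [h16, h16pos]
        calc (a + 2) ^ 2 * 8 ^ α ≤ 16 ^ (k + 1) * 18 * 8 ^ α :=
              mul_le_mul_of_nonneg_right e1 h8αpos.le
          _ = 16 ^ (k + 1) * (18 * 8 ^ α) := by ring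
    _ = m * h * h := by
        rw [hm_def, Real.div_rpow htpos.le (by norm_num : (0:ℝ) ≤ 8)]; ring
    _ ≤ F t := hFt
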